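/- Let n ≥ 2 be an integer, M > 0, and r_h = (2M)^{1/(n−1)}. Suppose u : (r_h, ∞) → ℝ is differentiable and satisfies ( 1 − 2M/r^{n−1} ) u′(r) + r^{−1} ( 1 + (n−1)(1 − 2M/r^{n−1}) ) u(r) = 0 for all r > r_h. Then there exists a constant d ∈ ℝ such that u(r) = d · (2M/r^{n−1}) · r^{−1} · ( 1 − 2M/r^{n−1} )^{−1/(n−1)} for all r > r_h. -/

import Mathlib

open Set

/-- **General solution of the ℓ = 1 scalar-mode ODE.**
For `n ≥ 2`, `M > 0` and `r_h = (2M)^{1/(n-1)}`, every differentiable solution `u`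
of `(1 - 2M/r^{n-1}) u' + r⁻¹(1 + (n-1)(1 - 2M/r^{n-1})) u = 0` on `(r_h, ∞)` is of
the form `u(r) = d (2M/r^{n-1}) r⁻¹ (1 - 2M/r^{n-1})^{-1/(n-1)}` for some constant `d`. -/
theorem l_one_scalar_mode_ode_solution
    (n : ℕ) (hn : 2 ≤ n) (M : ℝ) (hM : 0 < M)
    (u : ℝ → ℝ)
    (hdiff : ∀ r ∈ Ioi ((2*M) ^ ((1:ℝ)/((n:ℝ)-1))), DifferentiableAt ℝ u r)
    (hode : ∀ r ∈ Ioi ((2*M) ^ ((1:ℝ)/((n:ℝ)-1))),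
      (1 - 2*M/r^(n-1)) * deriv u r
        + r⁻¹ * (1 + ((n:ℝ)-1)*(1 - 2*M/r^(n-1))) * u r = 0) :
    ∃ d : ℝ, ∀ r ∈ Ioi ((2*M) ^ ((1:ℝ)/((n:ℝ)-1))),
      u r = d * (2*M/r^(n-1)) * r⁻¹ * (1 - 2*M/r^(n-1)) ^ (-(1:ℝ)/((n:ℝ)-1)) := by
  obtain ⟨m, rfl⟩ : ∃ m, n = m + 2 := ⟨n - 2, by omega⟩
  have hcast : ((m + 2 : ℕ) : ℝ) - 1 = (m : ℝ) + 1 := by push_cast; ring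
  have hsub : m + 2 - 1 = m + 1 := rfl
  simp only [hcast, hsub] at hdiff hode ⊢
  set c : ℝ := (m : ℝ) + 1 with hc
  have hcpos : 0 < c := by positivity
  set rh : ℝ := (2*M) ^ ((1:ℝ)/c) with hrh
  have h2M : 0 < 2*M := by linarith
  have hrhpos : 0 < rh := Real.rpow_pos_of_pos h2M _
  -- basic inequalities on the exterior
  have hfacts : ∀ r ∈ Ioi rh, 0 < r ∧ 2*M < r^(m+1) := by
    intro r hr
    have hr' : rh < r := hr
    have hrpos : 0 < r := lt_trans hrhpos hr'
    refine ⟨hrpos, ?_⟩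
    have h1 : rh ^ c < r ^ c := Real.rpow_lt_rpow hrhpos.le hr' hcpos
    have h2 : rh ^ c = 2*M := by
      rw [hrh, ← Real.rpow_mul h2M.le, one_div, inv_mul_cancel₀ hcpos.ne', Real.rpow_one]
    have h3 : r ^ c = r ^ (m+1) := by
      rw [hc, show (m:ℝ)+1 = ((m+1 : ℕ) : ℝ) by push_cast; ring, Real.rpow_natCast]
    rw [h2, h3] at h1
    exact h1
  -- the integrating factor
  set φ : ℝ → ℝ := fun r => r^(m+2) * (1 - 2*M/r^(m+1)) ^ ((1:ℝ)/c) with hφdef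
  set g : ℝ → ℝ := fun r => u r * φ r with hgdef
  -- positivity of F
  have hF : ∀ r ∈ Ioi rh, 0 < 1 - 2*M/r^(m+1) := by
    intro r hr
    obtain ⟨hrpos, hlt⟩ := hfacts r hr
    have hpow : (0:ℝ) < r^(m+1) := by positivity
    rw [sub_pos, div_lt_one hpow]
    exact hlt
  -- g has zero derivative everywhere on the exterior
  have key : ∀ r ∈ Ioi rh, HasDerivAt g 0 r := by
    intro r hr
    obtain ⟨hrpos, hlt⟩ := hfacts r hr
    have hFpos := hF r hr
    have hpow : (0:ℝ) < r^(m+1) := by positivity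
    have hFne : (1 - 2*M/r^(m+1)) ≠ 0 := hFpos.ne'
    have hFd := (hasDerivAt_const r (1:ℝ)).sub
        ((hasDerivAt_const r (2*M)).div (hasDerivAt_pow (m+1) r) hpow.ne')
    have hφd := (hasDerivAt_pow (m+2) r).mul (hFd.rpow_const (p := (1:ℝ)/c) (Or.inl hFne))
    have hgd := ((hdiff r hr).hasDerivAt).mul hφd
    have hode' := hode r hr
    have hFp : (1 - 2*M/r^(m+1)) ^ ((1:ℝ)/c)
        = (1 - 2*M/r^(m+1)) ^ ((1:ℝ)/c - 1) * (1 - 2*M/r^(m+1)) := by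
      rw [← Real.rpow_add_one hFne ((1:ℝ)/c - 1)]
      norm_num
    rw [hgdef]
    convert hgd using 1
    · rfl
    · rfl
    · rfl
    simp only [Pi.mul_apply, Pi.sub_apply, Pi.div_apply]
    rw [hFp]
    set A : ℝ := (1 - 2*M/r^(m+1)) ^ ((1:ℝ)/c - 1) with hA
    have hexp : deriv u r * (r ^ (m + 2) * (A * (1 - 2*M/r^(m+1))))
        + u r * (((m+2 : ℕ) : ℝ) * r ^ (m + 2 - 1) * (A * (1 - 2*M/r^(m+1)))
          + r ^ (m + 2) * ((0 - (0 * r ^ (m + 1) - 2 * M * (((m+1 : ℕ) : ℝ) * r ^ (m + 1 - 1)))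
                / (r ^ (m + 1)) ^ 2) * (1 / c) * A))
        = A * r^(m+2) * ((1 - 2*M/r^(m+1)) * deriv u r
            + r⁻¹ * (1 + c * (1 - 2*M/r^(m+1))) * u r) := by
      have hm1 : m + 1 - 1 = m := rfl
      have hm2 : m + 2 - 1 = m + 1 := rfl
      rw [hm1, hm2, hc]
      have hrne : r ≠ 0 := hrpos.ne'
      push_cast
      field_simp
      ring
    rw [hexp, hode', mul_zero]
  -- g is constant on the exterior
  set r0 : ℝ := rh + 1 with hr0
  have hr0mem : r0 ∈ Ioi rh := by simp [hr0]
  have hconst : ∀ r ∈ Ioi rh, g r = g r0 := by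
    intro r hr
    have hmem : ∀ x, r ≤ x ∨ r0 ≤ x → x ∈ Ioi rh := by
      intro x h1
      rcases h1 with h | h
      · exact lt_of_lt_of_le hr h
      · exact lt_of_lt_of_le hr0mem h
    rcases le_total r r0 with hle | hle
    · have := constant_of_has_deriv_right_zero (f := g) (a := r) (b := r0)
        (fun x hx => ((key x (hmem x (Or.inl hx.1))).continuousAt).continuousWithinAt)
        (fun x hx => ((key x (hmem x (Or.inl hx.1))).hasDerivWithinAt))
      exact (this r0 ⟨hle, le_refl r0⟩).symm
    · have := constant_of_has_deriv_right_zero (f := g) (a := r0) (b := r)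
        (fun x hx => ((key x (hmem x (Or.inr hx.1))).continuousAt).continuousWithinAt)
        (fun x hx => ((key x (hmem x (Or.inr hx.1))).hasDerivWithinAt))
      exact this r ⟨hle, le_refl r⟩
  -- extract the constant
  refine ⟨g r0 / (2*M), ?_⟩
  intro r hr
  obtain ⟨hrpos, hlt⟩ := hfacts r hr
  have hFpos := hF r hr
  have hpow : (0:ℝ) < r^(m+1) := by positivity
  have hrpowpos : (0:ℝ) < (1 - 2*M/r^(m+1)) ^ ((1:ℝ)/c) := Real.rpow_pos_of_pos hFpos _
  have hgr : g r = g r0 := hconst r hr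
  have hneg : (1 - 2*M/r^(m+1)) ^ (-(1:ℝ)/c) = ((1 - 2*M/r^(m+1)) ^ ((1:ℝ)/c))⁻¹ := by
    rw [neg_div, Real.rpow_neg hFpos.le]
  rw [hneg, ← hgr]
  have hgval : g r = u r * (r^(m+2) * (1 - 2*M/r^(m+1)) ^ ((1:ℝ)/c)) := rfl
  rw [hgval]
  have hsplit : r^(m+2) = r^(m+1) * r := by ring
  rw [hsplit]
  set B : ℝ := (1 - 2*M/r^(m+1)) ^ ((1:ℝ)/c) with hB
  set P : ℝ := r^(m+1) with hP
  have hBne : B ≠ 0 := hrpowpos.ne'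
  have hPne : P ≠ 0 := hpow.ne'
  have hrne : r ≠ 0 := hrpos.ne'
  field_simp
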